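/- arXiv:math/9408211 — 3 statements merged into one kernel-verified Lean document; each statement's English description precedes it below -/
import Mathlib

section
/- Projection formula for Laguerre polynomials: for −1 < β < α and every x ≥ 0 and every n ∈ ℕ, e^{−x} L_n^β(x) = (1/Γ(α−β)) ∫_x^∞ (y−x)^{α−β−1} e^{−y} L_n^α(y) dy. -/
open Finset MeasureTheory

section aux

open Set


lemma gamma_alt_sum (N : ℕ) : ∀ a c : ℝ, 0 < a → 0 < c →
    ∑ i ∈ range (N + 1), (-1 : ℝ) ^ i * (N.choose i : ℝ) *
        (Real.Gamma (a + i) / Real.Gamma (a + i + c))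
      = Real.Gamma a * Real.Gamma (c + N) / (Real.Gamma (a + c + N) * Real.Gamma c) := by
  induction N with
  | zero =>
    intro a c ha hc
    have hGc := (Real.Gamma_pos_of_pos hc).ne'
    have hGac := (Real.Gamma_pos_of_pos (by linarith : (0:ℝ) < a + c)).ne'
    simp only [zero_add, range_one, sum_singleton, Nat.cast_zero, add_zero, Nat.choose_zero_right,
      Nat.cast_one, pow_zero, one_mul, Nat.cast_ofNat]
    field_simp
  | succ N ih =>
    intro a c ha hc
    have key : ∑ i ∈ range (N + 2), (-1 : ℝ) ^ i * ((N+1).choose i : ℝ) *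
          (Real.Gamma (a + i) / Real.Gamma (a + i + c))
        = (∑ i ∈ range (N + 1), (-1 : ℝ) ^ i * (N.choose i : ℝ) *
            (Real.Gamma (a + i) / Real.Gamma (a + i + c)))
          - ∑ i ∈ range (N + 1), (-1 : ℝ) ^ i * (N.choose i : ℝ) *
            (Real.Gamma ((a+1) + i) / Real.Gamma ((a+1) + i + c)) := by
      have h1 := Finset.sum_range_succ' (fun i => (-1 : ℝ) ^ i * ((N+1).choose i : ℝ) *
            (Real.Gamma (a + i) / Real.Gamma (a + i + c))) (N+1)
      have h2 := Finset.sum_range_succ' (fun i => (-1 : ℝ) ^ i * ((N).choose i : ℝ) *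
            (Real.Gamma (a + i) / Real.Gamma (a + i + c))) (N+1)
      have h3 : ∑ i ∈ range (N + 2), (-1 : ℝ) ^ i * ((N).choose i : ℝ) *
            (Real.Gamma (a + i) / Real.Gamma (a + i + c))
          = ∑ i ∈ range (N + 1), (-1 : ℝ) ^ i * ((N).choose i : ℝ) *
            (Real.Gamma (a + i) / Real.Gamma (a + i + c)) := by
        rw [Finset.sum_range_succ]; simp
      have h4 : ∀ i ∈ range (N+1), (-1 : ℝ) ^ (i+1) * ((N+1).choose (i+1) : ℝ) *
            (Real.Gamma (a + ((i+1 : ℕ) : ℝ)) / Real.Gamma (a + ((i+1 : ℕ) : ℝ) + c))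
          = (-1 : ℝ) ^ (i+1) * ((N).choose (i+1) : ℝ) *
            (Real.Gamma (a + ((i+1 : ℕ) : ℝ)) / Real.Gamma (a + ((i+1 : ℕ) : ℝ) + c))
            - (-1 : ℝ) ^ i * ((N).choose i : ℝ) *
            (Real.Gamma ((a+1) + i) / Real.Gamma ((a+1) + i + c)) := by
        intro i _
        have hch : ((N+1).choose (i+1) : ℝ) = (N.choose i : ℝ) + (N.choose (i+1) : ℝ) := by
          rw [Nat.choose_succ_succ]; push_cast; ring
        have e1 : a + ((i+1 : ℕ) : ℝ) = (a+1) + i := by push_cast; ring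
        rw [hch, e1, pow_succ]
        ring
      rw [h1, Finset.sum_congr rfl h4, Finset.sum_sub_distrib]
      have h5 := h2.symm.trans h3
      simp only [Nat.choose_zero_right, Nat.cast_one, pow_zero, one_mul, Nat.cast_zero,
        add_zero] at h5 ⊢
      linarith [h5]
    push_cast at key ⊢
    rw [key, ih a c ha hc, ih (a+1) c (by linarith) hc]
    have hGa := Real.Gamma_pos_of_pos ha
    have hGc := Real.Gamma_pos_of_pos hc
    have hacN : (0:ℝ) < a + c + N := by positivity
    have hcN : (0:ℝ) < c + N := by positivity
    have hGacN := Real.Gamma_pos_of_pos hacN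
    have hGcN := Real.Gamma_pos_of_pos hcN
    have hGacN1 := Real.Gamma_pos_of_pos (by linarith : (0:ℝ) < a + c + N + 1)
    have r1 : Real.Gamma (a + 1) = a * Real.Gamma a := Real.Gamma_add_one (ne_of_gt ha)
    have r2 : Real.Gamma (a + c + (N:ℝ) + 1) = (a + c + N) * Real.Gamma (a + c + N) :=
      Real.Gamma_add_one (ne_of_gt hacN)
    have r3 : Real.Gamma (c + (N:ℝ) + 1) = (c + N) * Real.Gamma (c + N) :=
      Real.Gamma_add_one (ne_of_gt hcN)
    have e3 : a + 1 + c + (N:ℝ) = a + c + (N:ℝ) + 1 := by ring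
    have e4 : c + ((N:ℝ) + 1) = c + (N:ℝ) + 1 := by ring
    have e5 : a + c + ((N:ℝ) + 1) = a + c + (N:ℝ) + 1 := by ring
    rw [e4, e5, e3, r1, r2, r3]
    field_simp
    ring


lemma gamma_mono_integrable (s : ℝ) (hs : 0 < s) (k : ℕ) :
    IntegrableOn (fun t : ℝ => t ^ (s - 1) * Real.exp (-t) * t ^ k) (Set.Ioi 0) := by
  have h := Real.GammaIntegral_convergent (by positivity : (0:ℝ) < s + k)
  refine h.congr_fun (fun t ht => ?_) measurableSet_Ioi
  have ht' : (0:ℝ) < t := ht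
  simp only
  rw [show s + (k:ℝ) - 1 = (s - 1) + (k:ℝ) by ring, Real.rpow_add ht',
    Real.rpow_natCast]
  ring

lemma gamma_mono_integral (s : ℝ) (hs : 0 < s) (k : ℕ) :
    ∫ t in Set.Ioi (0:ℝ), t ^ (s - 1) * Real.exp (-t) * t ^ k = Real.Gamma (s + k) := by
  rw [Real.Gamma_eq_integral (by positivity : (0:ℝ) < s + k)]
  refine setIntegral_congr_fun measurableSet_Ioi (fun t ht => ?_)
  have ht' : (0:ℝ) < t := ht
  rw [show s + (k:ℝ) - 1 = (s - 1) + (k:ℝ) by ring, Real.rpow_add ht',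
    Real.rpow_natCast]
  ring

lemma shift_eq (s : ℝ) (x : ℝ) (j : ℕ) (t : ℝ) :
    (fun y : ℝ => (y - x) ^ (s - 1) * Real.exp (-y) * y ^ j) (t + x)
      = ∑ k ∈ range (j + 1),
          ((j.choose k : ℝ) * x ^ (j - k) * Real.exp (-x)) *
            (t ^ (s - 1) * Real.exp (-t) * t ^ k) := by
  simp only [add_sub_cancel_right]
  rw [add_pow, Finset.mul_sum]
  refine Finset.sum_congr rfl (fun k hk => ?_)
  rw [show -(t + x) = -t + -x by ring, Real.exp_add]
  ring

lemma laguerre_mono_integrable (s : ℝ) (hs : 0 < s) (x : ℝ) (j : ℕ) :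
    IntegrableOn (fun y : ℝ => (y - x) ^ (s - 1) * Real.exp (-y) * y ^ j) (Set.Ioi x) := by
  have hmp : MeasurePreserving (· + x) (volume : Measure ℝ) volume :=
    measurePreserving_add_right volume x
  have hemb : MeasurableEmbedding (· + x) :=
    (MeasurableEquiv.addRight x).measurableEmbedding
  rw [← hmp.integrableOn_comp_preimage hemb]
  have hpre : (· + x) ⁻¹' Set.Ioi x = Set.Ioi (0:ℝ) := by ext t; simp
  rw [hpre]
  have : ((fun y : ℝ => (y - x) ^ (s - 1) * Real.exp (-y) * y ^ j) ∘ (· + x))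
      = fun t => ∑ k ∈ range (j + 1),
          ((j.choose k : ℝ) * x ^ (j - k) * Real.exp (-x)) *
            (t ^ (s - 1) * Real.exp (-t) * t ^ k) := by
    funext t; exact shift_eq s x j t
  rw [this]
  exact integrable_finset_sum _ (fun k _ => (gamma_mono_integrable s hs k).const_mul _)

lemma laguerre_mono_integral (s : ℝ) (hs : 0 < s) (x : ℝ) (j : ℕ) :
    (∫ y in Set.Ioi x, (y - x) ^ (s - 1) * Real.exp (-y) * y ^ j)
      = Real.exp (-x) * ∑ k ∈ range (j + 1),
          (j.choose k : ℝ) * x ^ (j - k) * Real.Gamma (s + k) := by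
  have hmp : MeasurePreserving (· + x) (volume : Measure ℝ) volume :=
    measurePreserving_add_right volume x
  have hemb : MeasurableEmbedding (· + x) :=
    (MeasurableEquiv.addRight x).measurableEmbedding
  have hpre : (· + x) ⁻¹' Set.Ioi x = Set.Ioi (0:ℝ) := by ext t; simp
  have h0 := hmp.setIntegral_preimage_emb hemb
    (fun y : ℝ => (y - x) ^ (s - 1) * Real.exp (-y) * y ^ j) (Set.Ioi x)
  rw [hpre] at h0
  rw [← h0]
  calc ∫ t in Set.Ioi (0:ℝ),
        (fun y : ℝ => (y - x) ^ (s - 1) * Real.exp (-y) * y ^ j) (t + x)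
      = ∫ t in Set.Ioi (0:ℝ), ∑ k ∈ range (j + 1),
          ((j.choose k : ℝ) * x ^ (j - k) * Real.exp (-x)) *
            (t ^ (s - 1) * Real.exp (-t) * t ^ k) := by
        refine setIntegral_congr_fun measurableSet_Ioi (fun t _ => ?_)
        exact shift_eq s x j t
    _ = ∑ k ∈ range (j + 1), ∫ t in Set.Ioi (0:ℝ),
          ((j.choose k : ℝ) * x ^ (j - k) * Real.exp (-x)) *
            (t ^ (s - 1) * Real.exp (-t) * t ^ k) :=
        integral_finset_sum _ (fun k _ => (gamma_mono_integrable s hs k).const_mul _)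
    _ = Real.exp (-x) * ∑ k ∈ range (j + 1),
          (j.choose k : ℝ) * x ^ (j - k) * Real.Gamma (s + k) := by
        rw [Finset.mul_sum]
        refine Finset.sum_congr rfl (fun k _ => ?_)
        rw [integral_const_mul, gamma_mono_integral s hs k]
        ring


lemma sum_triangle {M : Type*} [AddCommMonoid M] (n : ℕ) (f : ℕ → ℕ → M) :
    ∑ j ∈ range (n + 1), ∑ k ∈ range (j + 1), f j k
      = ∑ m ∈ range (n + 1), ∑ i ∈ range (n + 1 - m), f (m + i) i := by
  rw [Finset.sum_sigma', Finset.sum_sigma']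
  refine Finset.sum_nbij' (fun p => ⟨p.1 - p.2, p.2⟩) (fun p => ⟨p.1 + p.2, p.2⟩)
    ?_ ?_ ?_ ?_ ?_
  · rintro ⟨j, k⟩ hp
    simp only [Finset.mem_sigma, Finset.mem_range] at hp ⊢
    omega
  · rintro ⟨m, i⟩ hp
    simp only [Finset.mem_sigma, Finset.mem_range] at hp ⊢
    omega
  · rintro ⟨j, k⟩ hp
    simp only [Finset.mem_sigma, Finset.mem_range] at hp
    simp only [Sigma.mk.inj_iff]
    constructor
    · omega
    · exact HEq.rfl
  · rintro ⟨m, i⟩ hp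
    simp only [Sigma.mk.inj_iff]
    constructor
    · omega
    · exact HEq.rfl
  · rintro ⟨j, k⟩ hp
    simp only [Finset.mem_sigma, Finset.mem_range] at hp
    have : j - k + k = j := by omega
    simp [this]

end aux

/-- The generalized Laguerre polynomial `L_n^α(x) = ∑_{j=0}^n binom(n+α, n−j) (−x)^j / j!`. -/
noncomputable def laguerre (α : ℝ) (n : ℕ) (x : ℝ) : ℝ :=
  ∑ j ∈ Finset.range (n + 1),
    Real.Gamma ((n : ℝ) + α + 1) /
      (Real.Gamma (α + (j : ℝ) + 1) * ((n - j).factorial : ℝ)) * (-x) ^ j / (j.factorial : ℝ)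

theorem laguerre_projection (α β : ℝ) (hβ : -1 < β) (hβα : β < α) (x : ℝ) (hx : 0 ≤ x)
    (n : ℕ) :
    Real.exp (-x) * laguerre β n x =
      (1 / Real.Gamma (α - β)) *
        ∫ y in Set.Ioi x, (y - x) ^ (α - β - 1) * Real.exp (-y) * laguerre α n y := by
  set s : ℝ := α - β with hs_def
  have hs : 0 < s := by rw [hs_def]; linarith
  have hΓs := Real.Gamma_pos_of_pos hs
  set d : ℕ → ℝ := fun j =>
    Real.Gamma ((n : ℝ) + α + 1) /
      (Real.Gamma (α + (j : ℝ) + 1) * ((n - j).factorial : ℝ)) * (-1 : ℝ) ^ j /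
      (j.factorial : ℝ) with hd_def
  -- Step 1: compute the integral
  have step1 : (∫ y in Set.Ioi x, (y - x) ^ (s - 1) * Real.exp (-y) * laguerre α n y)
      = ∑ j ∈ range (n + 1), ∑ k ∈ range (j + 1),
          d j * Real.exp (-x) * ((j.choose k : ℝ) * x ^ (j - k) * Real.Gamma (s + k)) := by
    have hint : ∀ y : ℝ, (y - x) ^ (s - 1) * Real.exp (-y) * laguerre α n y
        = ∑ j ∈ range (n + 1), d j * ((y - x) ^ (s - 1) * Real.exp (-y) * y ^ j) := by
      intro y
      rw [laguerre, Finset.mul_sum]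
      refine Finset.sum_congr rfl fun j _ => ?_
      rw [hd_def, neg_pow]
      ring
    rw [setIntegral_congr_fun measurableSet_Ioi (fun y _ => hint y),
      integral_finset_sum _ (fun j _ => ((laguerre_mono_integrable s hs x j).const_mul _))]
    refine Finset.sum_congr rfl fun j _ => ?_
    rw [integral_const_mul, laguerre_mono_integral s hs x j, Finset.mul_sum, Finset.mul_sum]
    refine Finset.sum_congr rfl fun k _ => ?_
    ring
  rw [step1, sum_triangle n (fun j k =>
      d j * Real.exp (-x) * ((j.choose k : ℝ) * x ^ (j - k) * Real.Gamma (s + k))),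
    Finset.mul_sum, laguerre, Finset.mul_sum]
  refine Finset.sum_congr rfl fun m hm => ?_
  have hmn : m ≤ n := by simpa using Nat.lt_succ_iff.mp (Finset.mem_range.mp hm)
  set N : ℕ := n - m with hN_def
  have hrange : n + 1 - m = N + 1 := by omega
  have hc : (0:ℝ) < β + m + 1 := by
    have : (0:ℝ) ≤ m := Nat.cast_nonneg m
    linarith
  -- rewrite inner sum into the gamma_alt_sum shape
  have inner : ∑ i ∈ range (n + 1 - m),
        d (m + i) * Real.exp (-x) *
          (((m + i).choose i : ℝ) * x ^ (m + i - i) * Real.Gamma (s + i))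
      = (Real.exp (-x) * x ^ m * (-1 : ℝ) ^ m * Real.Gamma ((n : ℝ) + α + 1) /
          ((m.factorial : ℝ) * (N.factorial : ℝ))) *
        ∑ i ∈ range (N + 1), (-1 : ℝ) ^ i * (N.choose i : ℝ) *
          (Real.Gamma (s + i) / Real.Gamma (s + i + (β + m + 1))) := by
    rw [hrange, Finset.mul_sum]
    refine Finset.sum_congr rfl fun i hi => ?_
    have hiN : i ≤ N := Nat.lt_succ_iff.mp (Finset.mem_range.mp hi)
    have hch1 : (((m + i).choose i : ℕ) : ℝ) * ((i.factorial : ℝ) * (m.factorial : ℝ))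
        = ((m + i).factorial : ℝ) := by
      have h := Nat.choose_mul_factorial_mul_factorial (Nat.le_add_left i m)
      rw [Nat.add_sub_cancel] at h
      push_cast [← h]
      ring
    have hch2 : ((N.choose i : ℕ) : ℝ) * ((i.factorial : ℝ) * ((N - i).factorial : ℝ))
        = (N.factorial : ℝ) := by
      have h := Nat.choose_mul_factorial_mul_factorial hiN
      push_cast [← h]
      ring
    have hsub : n - (m + i) = N - i := by omega
    have hmsub : m + i - i = m := by omega
    have hgammaarg : α + ((m + i : ℕ) : ℝ) + 1 = s + i + (β + m + 1) := by
      push_cast [hs_def]; ring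
    have hΓ : (0:ℝ) < Real.Gamma (s + i + (β + m + 1)) := by
      refine Real.Gamma_pos_of_pos ?_
      have : (0:ℝ) ≤ i := Nat.cast_nonneg i
      linarith
    have hfac1 : ((m + i).factorial : ℝ) ≠ 0 := Nat.cast_ne_zero.mpr (Nat.factorial_ne_zero _)
    have hfac2 : ((N - i).factorial : ℝ) ≠ 0 := Nat.cast_ne_zero.mpr (Nat.factorial_ne_zero _)
    have hfacm : ((m).factorial : ℝ) ≠ 0 := Nat.cast_ne_zero.mpr (Nat.factorial_ne_zero _)
    have hfaci : ((i).factorial : ℝ) ≠ 0 := Nat.cast_ne_zero.mpr (Nat.factorial_ne_zero _)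
    have hfacN : ((N).factorial : ℝ) ≠ 0 := Nat.cast_ne_zero.mpr (Nat.factorial_ne_zero _)
    simp only [hd_def]
    rw [hsub, hmsub, hgammaarg, pow_add]
    have e1 : (((m + i).choose i : ℕ) : ℝ)
        = ((m + i).factorial : ℝ) / ((i.factorial : ℝ) * (m.factorial : ℝ)) := by
      field_simp [← hch1]
      rw [mul_assoc]; exact hch1
    have e2 : ((N.choose i : ℕ) : ℝ)
        = (N.factorial : ℝ) / ((i.factorial : ℝ) * ((N - i).factorial : ℝ)) := by
      field_simp [← hch2]
      rw [mul_assoc]; exact hch2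
    rw [e1, e2]
    field_simp
  rw [inner, gamma_alt_sum N s (β + m + 1) hs hc]
  -- final bookkeeping
  have hcastN : (N : ℝ) = (n : ℝ) - m := by
    rw [hN_def]; push_cast [Nat.cast_sub hmn]; ring
  have e3 : β + ((m : ℝ)) + 1 + (N : ℝ) = (n : ℝ) + β + 1 := by rw [hcastN]; ring
  have e4 : s + (β + (m : ℝ) + 1) + (N : ℝ) = (n : ℝ) + α + 1 := by
    rw [hcastN, hs_def]; ring
  rw [e3, e4]
  have hΓβm := Real.Gamma_pos_of_pos hc
  have hΓnα : (0:ℝ) < Real.Gamma ((n : ℝ) + α + 1) := by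
    refine Real.Gamma_pos_of_pos ?_
    have : (0:ℝ) ≤ n := Nat.cast_nonneg n
    linarith
  have hfacm : ((m).factorial : ℝ) ≠ 0 := Nat.cast_ne_zero.mpr (Nat.factorial_ne_zero _)
  have hfacN : ((N).factorial : ℝ) ≠ 0 := Nat.cast_ne_zero.mpr (Nat.factorial_ne_zero _)
  have hNnm : ((n - m).factorial : ℝ) = (N.factorial : ℝ) := by rw [hN_def]
  rw [hNnm, neg_pow]
  field_simp
end

section
/- Weighted ℓ² Hardy-type step estimate: let α > 0 and A_k^{α+1} = binom(k+α+1, k). For any complex sequence (m_k) set ‖m‖ := sup_k |m_k| + sup_N (∑_{k=N}^{2N} |(k+1)Δm_k|²/(k+1))^{1/2} with Δm_k = m_k − m_{k+1}. Then there is a constant C (depending only on α) such that for every N ∈ ℕ, (∑_{k=0}^N A_k^{α+1}|Δm_k|²)·(∑_{k=N}^∞ (A_k^{α+1})^{−1}) ≤ C‖m‖². -/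
open Finset

/-- The generalized binomial coefficient `A_k^{α+1} = Γ(k+α+2)/(Γ(k+1)Γ(α+2))`. -/
noncomputable def binomA (α : ℝ) (k : ℕ) : ℝ :=
  Real.Gamma ((k : ℝ) + α + 2) / (Real.Gamma ((k : ℝ) + 1) * Real.Gamma (α + 2))

/-- The (descending) forward difference operator `Δm_k = m_k − m_{k+1}`. -/
def fdiff (m : ℕ → ℂ) : ℕ → ℂ := fun k => m k - m (k + 1)

/-- Auxiliary product `B_k = Γ(k+α+1)/(Γ(k+1)Γ(α+1))`, defined as a finite product. -/
noncomputable def bbA (α : ℝ) (k : ℕ) : ℝ :=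
  ∏ j ∈ range k, (((j : ℝ) + α + 1) / ((j : ℝ) + 1))

lemma bbA_pos {α : ℝ} (hα : 0 < α) (k : ℕ) : 0 < bbA α k := by
  apply Finset.prod_pos
  intro j _
  have h1 : (0:ℝ) < (j:ℝ) + 1 := by positivity
  have h2 : (0:ℝ) < (j:ℝ) + α + 1 := by positivity
  exact div_pos h2 h1

lemma bbA_succ (α : ℝ) (k : ℕ) :
    bbA α (k+1) = bbA α k * (((k : ℝ) + α + 1) / ((k : ℝ) + 1)) :=
  Finset.prod_range_succ _ _

lemma bbA_mono {α : ℝ} (hα : 0 < α) : Monotone (bbA α) := by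
  apply monotone_nat_of_le_succ
  intro k
  rw [bbA_succ]
  have h1 : (1:ℝ) ≤ ((k:ℝ)+α+1)/((k:ℝ)+1) := by
    rw [le_div_iff₀ (by positivity)]; linarith
  nlinarith [bbA_pos hα k]

lemma binomA_eq {α : ℝ} (hα : 0 < α) (k : ℕ) :
    binomA α k = bbA α k * (((k:ℝ) + α + 1) / (α + 1)) := by
  have hΓ : (0:ℝ) < Real.Gamma (α + 2) := Real.Gamma_pos_of_pos (by linarith)
  induction k with
  | zero =>
    simp only [binomA, bbA, Nat.cast_zero, zero_add, Finset.range_zero, Finset.prod_empty,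
      Real.Gamma_one, one_mul]
    field_simp
  | succ k ih =>
    have hk1 : ((k:ℝ) + 1) ≠ 0 := by positivity
    have hka : ((k:ℝ) + α + 2) ≠ 0 := by positivity
    have hΓk : (0:ℝ) < Real.Gamma ((k:ℝ) + 1) :=
      Real.Gamma_pos_of_pos (by positivity)
    have hstep : binomA α (k+1) = binomA α k * (((k:ℝ)+α+2) / ((k:ℝ)+1)) := by
      simp only [binomA, Nat.cast_succ]
      have e1 : (k:ℝ) + 1 + α + 2 = ((k:ℝ) + α + 2) + 1 := by ring
      have e2 : (k:ℝ) + 1 + 1 = ((k:ℝ) + 1) + 1 := by ring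
      rw [e1, e2, Real.Gamma_add_one hka, Real.Gamma_add_one hk1]
      field_simp
    rw [hstep, ih, bbA_succ]
    push_cast
    field_simp
    ring

lemma binomA_pos {α : ℝ} (hα : 0 < α) (k : ℕ) : 0 < binomA α k := by
  rw [binomA_eq hα]
  have h1 : (0:ℝ) < (k:ℝ) + α + 1 := by positivity
  have h2 : (0:ℝ) < α + 1 := by linarith
  exact mul_pos (bbA_pos hα k) (div_pos h1 h2)

lemma binomA_inv_telescope {α : ℝ} (hα : 0 < α) (k : ℕ) :
    (binomA α k)⁻¹ = ((α+1)/α) * ((bbA α k)⁻¹ - (bbA α (k+1))⁻¹) := by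
  have hb := bbA_pos hα k
  have hb' := bbA_pos hα (k+1)
  have hk1 : (0:ℝ) < (k:ℝ)+1 := by positivity
  have hka : (0:ℝ) < (k:ℝ)+α+1 := by positivity
  rw [binomA_eq hα, bbA_succ]
  rw [show bbA α k * (((k:ℝ)+α+1)/((k:ℝ)+1)) = bbA α k * ((k:ℝ)+α+1)/((k:ℝ)+1) by ring]
  field_simp
  ring

lemma tail_partial {α : ℝ} (hα : 0 < α) (N n : ℕ) :
    ∑ k ∈ range n, (binomA α (k + N))⁻¹
      = ((α+1)/α) * ((bbA α N)⁻¹ - (bbA α (N + n))⁻¹) := by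
  induction n with
  | zero => simp
  | succ n ihn =>
    rw [Finset.sum_range_succ, ihn, binomA_inv_telescope hα (n + N)]
    have h : n + N + 1 = N + (n + 1) := by omega
    rw [h]
    have h2 : n + N = N + n := by omega
    rw [h2]
    ring

lemma tail_bound {α : ℝ} (hα : 0 < α) (N : ℕ) :
    ∑' k : ℕ, (binomA α (k + N))⁻¹ ≤ ((α+1)/α) * (bbA α N)⁻¹ := by
  apply Real.tsum_le_of_sum_range_le
  · intro n
    exact le_of_lt (inv_pos.mpr (binomA_pos hα (n + N)))
  · intro n
    rw [tail_partial hα N n]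
    have h1 := bbA_pos hα (N + n)
    have h2 : (0:ℝ) ≤ (α+1)/α := by positivity
    have h3 : (0:ℝ) ≤ (bbA α (N + n))⁻¹ := by positivity
    nlinarith

lemma bbA_doubling {α : ℝ} (hα : 0 < α) {N : ℕ} (hN : 0 < N) :
    (1 + α/2) * bbA α (N/2) ≤ bbA α N := by
  set N' := N / 2 with hN'def
  have h1 : N' ≤ N := Nat.div_le_self _ _
  have h2 : N ≤ 2 * (N - N') := by omega
  have hNpos : (0:ℝ) < (N:ℝ) := by exact_mod_cast hN
  have key : bbA α N = bbA α N' * ∏ j ∈ Ico N' N, (((j:ℝ)+α+1)/((j:ℝ)+1)) := by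
    rw [bbA, bbA, range_eq_Ico, range_eq_Ico]
    exact (Finset.prod_Ico_consecutive (fun j : ℕ => ((j:ℝ)+α+1)/((j:ℝ)+1)) (Nat.zero_le N') h1).symm
  have hterm : ∀ j ∈ Ico N' N, (1 + α/(N:ℝ)) ≤ ((j:ℝ)+α+1)/((j:ℝ)+1) := by
    intro j hj
    have hjN : j < N := (Finset.mem_Ico.mp hj).2
    have hj2 : (j:ℝ) + 1 ≤ (N:ℝ) := by exact_mod_cast Nat.succ_le_of_lt hjN
    have hj1 : (0:ℝ) < (j:ℝ)+1 := by positivity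
    have e : ((j:ℝ)+α+1)/((j:ℝ)+1) = 1 + α/((j:ℝ)+1) := by field_simp; ring
    rw [e]
    have : α/(N:ℝ) ≤ α/((j:ℝ)+1) := by
      apply div_le_div_of_nonneg_left (le_of_lt hα) hj1 hj2
    linarith
  have hprod : (1 + α/(N:ℝ))^(N - N') ≤ ∏ j ∈ Ico N' N, (((j:ℝ)+α+1)/((j:ℝ)+1)) := by
    have hh := Finset.prod_le_prod (s := Ico N' N)
      (f := fun _ : ℕ => 1 + α/(N:ℝ)) (g := fun j : ℕ => ((j:ℝ)+α+1)/((j:ℝ)+1))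
      (fun i _ => by positivity) hterm
    simpa [Finset.prod_const, Nat.card_Ico] using hh
  have hbern : 1 + ((N - N' : ℕ) : ℝ) * (α/(N:ℝ)) ≤ (1 + α/(N:ℝ))^(N - N') := by
    have hge : (-2:ℝ) ≤ α/(N:ℝ) := by
      have h0 : (0:ℝ) ≤ α/(N:ℝ) := by positivity
      linarith
    have := one_add_mul_le_pow hge (N - N')
    simpa [mul_comm] using this
  have hfin : 1 + α/2 ≤ 1 + ((N - N' : ℕ) : ℝ) * (α/(N:ℝ)) := by
    have hc : (N:ℝ) ≤ 2 * ((N - N' : ℕ) : ℝ) := by exact_mod_cast h2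
    have h3 : α / 2 ≤ ((N - N' : ℕ) : ℝ) * (α/(N:ℝ)) := by
      rw [show ((N - N' : ℕ) : ℝ) * (α/(N:ℝ)) = (((N - N' : ℕ) : ℝ) * α) / (N:ℝ) by ring]
      rw [div_le_div_iff₀ (by norm_num) hNpos]
      nlinarith
    linarith
  have hb' := bbA_pos hα N'
  calc (1 + α/2) * bbA α N'
      ≤ (1 + ((N - N' : ℕ) : ℝ) * (α/(N:ℝ))) * bbA α N' :=
        mul_le_mul_of_nonneg_right hfin hb'.le
    _ ≤ ((1 + α/(N:ℝ))^(N - N')) * bbA α N' :=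
        mul_le_mul_of_nonneg_right hbern hb'.le
    _ ≤ (∏ j ∈ Ico N' N, (((j:ℝ)+α+1)/((j:ℝ)+1))) * bbA α N' :=
        mul_le_mul_of_nonneg_right hprod hb'.le
    _ = bbA α N := by rw [key]; ring

lemma key_sum {α : ℝ} (hα : 0 < α) (m : ℕ → ℂ) (M : ℝ)
    (H : ∀ N : ℕ, ∑ k ∈ Finset.Icc N (2 * N),
        (((k : ℝ) + 1) * ‖fdiff m k‖) ^ 2 / ((k : ℝ) + 1) ≤ M ^ 2) :
    ∀ N : ℕ, ∑ k ∈ Finset.range (N + 1), binomA α k * ‖fdiff m k‖ ^ 2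
      ≤ ((α+2)/α) * bbA α N * M ^ 2 := by
  have hM2 : (0:ℝ) ≤ M ^ 2 := sq_nonneg M
  have H' : ∀ P : ℕ, ∑ k ∈ Finset.Icc P (2 * P),
      ((k:ℝ) + 1) * ‖fdiff m k‖ ^ 2 ≤ M ^ 2 := by
    intro P
    calc ∑ k ∈ Finset.Icc P (2 * P), ((k:ℝ) + 1) * ‖fdiff m k‖ ^ 2
        = ∑ k ∈ Finset.Icc P (2 * P),
            (((k:ℝ) + 1) * ‖fdiff m k‖) ^ 2 / ((k:ℝ) + 1) := by
          apply Finset.sum_congr rfl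
          intro k _
          have hk : ((k:ℝ) + 1) ≠ 0 := by positivity
          field_simp
      _ ≤ M ^ 2 := H P
  have hK1 : (1:ℝ) ≤ (α+2)/α := by
    rw [le_div_iff₀ hα]; linarith
  intro N
  induction N using Nat.strong_induction_on with
  | _ N ih =>
    rcases Nat.eq_zero_or_pos N with rfl | hN
    · -- base case N = 0
      have h0 := H' 0
      simp only [Nat.mul_zero, Finset.Icc_self, Finset.sum_singleton, Nat.cast_zero,
        zero_add, one_mul] at h0
      have hA0 : binomA α 0 = 1 := by
        rw [binomA_eq hα]
        simp only [bbA, Finset.range_zero, Finset.prod_empty, Nat.cast_zero, zero_add, one_mul]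
        field_simp
      have hbb0 : bbA α 0 = 1 := by
        simp [bbA]
      rw [Finset.sum_range_one, hA0, hbb0]
      have hd0 : (0:ℝ) ≤ ‖fdiff m 0‖ ^ 2 := sq_nonneg _
      nlinarith
    · -- inductive step
      set N' := N / 2 with hN'def
      have hlt : N' < N := Nat.div_lt_self hN (by norm_num)
      have hsplit : ∑ k ∈ Finset.range (N + 1), binomA α k * ‖fdiff m k‖ ^ 2
          = ∑ k ∈ Finset.range (N' + 1), binomA α k * ‖fdiff m k‖ ^ 2
            + ∑ k ∈ Finset.Icc (N' + 1) N, binomA α k * ‖fdiff m k‖ ^ 2 := by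
        rw [range_eq_Ico, range_eq_Ico, ← Finset.Ico_add_one_right_eq_Icc (N' + 1) N]
        exact (Finset.sum_Ico_consecutive (fun k => binomA α k * ‖fdiff m k‖ ^ 2) (Nat.zero_le (N' + 1))
          (by omega : N' + 1 ≤ N + 1)).symm
      have hIH : ∑ k ∈ Finset.range (N' + 1), binomA α k * ‖fdiff m k‖ ^ 2
          ≤ ((α+2)/α) * bbA α N' * M ^ 2 := ih N' hlt
      have hblock : ∑ k ∈ Finset.Icc (N' + 1) N, binomA α k * ‖fdiff m k‖ ^ 2
          ≤ bbA α N * M ^ 2 := by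
        have step1 : ∑ k ∈ Finset.Icc (N' + 1) N, binomA α k * ‖fdiff m k‖ ^ 2
            ≤ ∑ k ∈ Finset.Icc (N' + 1) N,
                bbA α N * (((k:ℝ) + 1) * ‖fdiff m k‖ ^ 2) := by
          apply Finset.sum_le_sum
          intro k hk
          have hkN : k ≤ N := (Finset.mem_Icc.mp hk).2
          have hknn : (0:ℝ) ≤ (k:ℝ) := Nat.cast_nonneg k
          have hA : binomA α k ≤ bbA α N * ((k:ℝ) + 1) := by
            rw [binomA_eq hα]
            have h2 : bbA α k ≤ bbA α N := bbA_mono hα hkN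
            have h3 : ((k:ℝ) + α + 1)/(α + 1) ≤ (k:ℝ) + 1 := by
              rw [div_le_iff₀ (by linarith : (0:ℝ) < α + 1)]
              nlinarith
            have h4 : (0:ℝ) ≤ ((k:ℝ) + α + 1)/(α + 1) := by positivity
            exact mul_le_mul h2 h3 h4 (bbA_pos hα N).le
          refine le_trans (mul_le_mul_of_nonneg_right hA (sq_nonneg _))
            (le_of_eq (by ring))
        have step2 : ∑ k ∈ Finset.Icc (N' + 1) N, ((k:ℝ) + 1) * ‖fdiff m k‖ ^ 2
            ≤ M ^ 2 := by
          calc ∑ k ∈ Finset.Icc (N' + 1) N, ((k:ℝ) + 1) * ‖fdiff m k‖ ^ 2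
              ≤ ∑ k ∈ Finset.Icc (N' + 1) (2 * (N' + 1)),
                  ((k:ℝ) + 1) * ‖fdiff m k‖ ^ 2 := by
                apply Finset.sum_le_sum_of_subset_of_nonneg
                · apply Finset.Icc_subset_Icc_right
                  omega
                · intro k _ _
                  positivity
            _ ≤ M ^ 2 := H' (N' + 1)
        calc ∑ k ∈ Finset.Icc (N' + 1) N, binomA α k * ‖fdiff m k‖ ^ 2
            ≤ ∑ k ∈ Finset.Icc (N' + 1) N,
                bbA α N * (((k:ℝ) + 1) * ‖fdiff m k‖ ^ 2) := step1
          _ = bbA α N * ∑ k ∈ Finset.Icc (N' + 1) N,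
                ((k:ℝ) + 1) * ‖fdiff m k‖ ^ 2 := by rw [Finset.mul_sum]
          _ ≤ bbA α N * M ^ 2 :=
              mul_le_mul_of_nonneg_left step2 (bbA_pos hα N).le
      -- combine using the doubling bound
      have hd : (1 + α/2) * bbA α N' ≤ bbA α N := bbA_doubling hα hN
      have hcomb : ((α+2)/α) * bbA α N' + bbA α N ≤ ((α+2)/α) * bbA α N := by
        have h2 : (2/α) * ((1 + α/2) * bbA α N') ≤ (2/α) * bbA α N :=
          mul_le_mul_of_nonneg_left hd (by positivity)
        have h3 : (2/α) * ((1 + α/2) * bbA α N') = ((α+2)/α) * bbA α N' := by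
          field_simp
          ring
        have h4 : ((α+2)/α) * bbA α N = (2/α) * bbA α N + bbA α N := by
          field_simp
          ring
        linarith
      calc ∑ k ∈ Finset.range (N + 1), binomA α k * ‖fdiff m k‖ ^ 2
          = ∑ k ∈ Finset.range (N' + 1), binomA α k * ‖fdiff m k‖ ^ 2
            + ∑ k ∈ Finset.Icc (N' + 1) N, binomA α k * ‖fdiff m k‖ ^ 2 := hsplit
        _ ≤ ((α+2)/α) * bbA α N' * M ^ 2 + bbA α N * M ^ 2 := by linarith
        _ = (((α+2)/α) * bbA α N' + bbA α N) * M ^ 2 := by ring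
        _ ≤ (((α+2)/α) * bbA α N) * M ^ 2 := mul_le_mul_of_nonneg_right hcomb hM2
        _ = ((α+2)/α) * bbA α N * M ^ 2 := by ring

theorem wbv_step_estimate (α : ℝ) (hα : 0 < α) :
    ∃ C : ℝ, 0 < C ∧ ∀ (m : ℕ → ℂ) (M : ℝ),
      (∀ k : ℕ, ‖m k‖ ≤ M) →
      (∀ N : ℕ, ∑ k ∈ Finset.Icc N (2 * N),
          (((k : ℝ) + 1) * ‖fdiff m k‖) ^ 2 / ((k : ℝ) + 1) ≤ M ^ 2) →
      ∀ N : ℕ,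
        (∑ k ∈ Finset.range (N + 1), binomA α k * ‖fdiff m k‖ ^ 2) *
            (∑' k : ℕ, (binomA α (k + N))⁻¹)
          ≤ C * M ^ 2 := by
  refine ⟨((α+2)/α) * ((α+1)/α), by positivity, ?_⟩
  intro m M _ H N
  have hS := key_sum hα m M H N
  have hT := tail_bound hα N
  have hSnn : (0:ℝ) ≤ ∑ k ∈ Finset.range (N + 1), binomA α k * ‖fdiff m k‖ ^ 2 :=
    Finset.sum_nonneg fun k _ => mul_nonneg (binomA_pos hα k).le (sq_nonneg _)
  have hbb := bbA_pos hα N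
  have hM2 : (0:ℝ) ≤ M ^ 2 := sq_nonneg M
  have hTnn : (0:ℝ) ≤ ∑' k : ℕ, (binomA α (k + N))⁻¹ :=
    tsum_nonneg fun k => (inv_pos.mpr (binomA_pos hα (k + N))).le
  calc (∑ k ∈ Finset.range (N + 1), binomA α k * ‖fdiff m k‖ ^ 2) *
          (∑' k : ℕ, (binomA α (k + N))⁻¹)
      ≤ (((α+2)/α) * bbA α N * M ^ 2) * (((α+1)/α) * (bbA α N)⁻¹) := by
        apply mul_le_mul hS hT hTnn (by positivity)
    _ = ((α+2)/α) * ((α+1)/α) * M ^ 2 * (bbA α N * (bbA α N)⁻¹) := by ring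
    _ = ((α+2)/α) * ((α+1)/α) * M ^ 2 := by
        rw [mul_inv_cancel₀ (ne_of_gt hbb), mul_one]
end

section
/- Fractional-difference/parameter-shift formula for Laguerre coefficients: let α > −1, λ ≥ 0, and let f be a polynomial. Define f̂_α(n) = ∫_0^∞ f(x) (L_n^α(x)/L_n^α(0)) x^α e^{−x} dx and the fractional difference Δ^λ m_k = ∑_{j=0}^∞ A_j^{−λ−1} m_{k+j} with A_j^{−λ−1} = binom(j−λ−1, j). Then Δ^λ f̂_α(k) = C_{α,λ} · f̂_{α+λ}(k) for every k, where C_{α,λ} = Γ(α+1)/Γ(α+λ+1). -/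
open Finset MeasureTheory

/-- The Fourier–Laguerre coefficient `f̂_α(n) = ∫_0^∞ f(x) R_n^α(x) x^α e^{−x} dx`. -/
noncomputable def lagCoeff (α : ℝ) (f : Polynomial ℝ) (n : ℕ) : ℝ :=
  ∫ x in Set.Ioi (0 : ℝ),
    f.eval x * (laguerre α n x / laguerre α n 0) * x ^ α * Real.exp (-x)

/-- The generalized binomial coefficient `A_j^δ = binom(j+δ, j) = ∏_{i=1}^j (δ+i)/i`. -/
noncomputable def binomGen (δ : ℝ) (j : ℕ) : ℝ :=
  ∏ i ∈ Finset.range j, (δ + (i : ℝ) + 1) / ((i : ℝ) + 1)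



noncomputable def PP (m : ℕ) (t : ℝ) : ℝ := ∏ i ∈ Finset.range m, (t + i + 1)




/-- generalized binomial coefficient `binom(x, j)` -/
noncomputable def ch (x : ℝ) (j : ℕ) : ℝ := (∏ i ∈ Finset.range j, (x - i)) / (j.factorial : ℝ)

lemma ch_natCast (a j : ℕ) : ch (a : ℝ) j = (a.choose j : ℝ) := by
  rcases le_or_gt j a with h | h
  · have hprod : (∏ i ∈ Finset.range j, ((a : ℝ) - i)) = (a.descFactorial j : ℝ) := by
      rw [Nat.descFactorial_eq_prod_range, Nat.cast_prod]
      refine Finset.prod_congr rfl fun i hi => ?_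
      have : i ≤ a := le_trans (Nat.le_of_lt_succ (Nat.lt_succ_of_lt (Finset.mem_range.1 hi))) (le_trans (Nat.le_of_lt_succ (Nat.lt_succ_of_le (le_refl j))) h)
      rw [Nat.cast_sub this]
    rw [ch, hprod, Nat.descFactorial_eq_factorial_mul_choose, Nat.cast_mul]
    field_simp
  · have : ((a : ℝ) - a) = 0 := by ring
    rw [ch, Finset.prod_eq_zero (Finset.mem_range.2 h) this, Nat.choose_eq_zero_of_lt h]
    simp

/-- `ch x j` as a polynomial in `x`. -/
noncomputable def chP (j : ℕ) : Polynomial ℝ :=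
  Polynomial.C ((j.factorial : ℝ))⁻¹ * ∏ i ∈ Finset.range j, (Polynomial.X - Polynomial.C (i : ℝ))

lemma chP_eval (j : ℕ) (x : ℝ) : (chP j).eval x = ch x j := by
  simp [chP, ch, Polynomial.eval_prod, div_eq_inv_mul]

lemma poly_eq_of_nat_eval {p q : Polynomial ℝ} (h : ∀ n : ℕ, p.eval (n : ℝ) = q.eval (n : ℝ)) :
    p = q := by
  have : p - q = 0 := by
    apply Polynomial.eq_zero_of_infinite_isRoot
    apply Set.Infinite.mono (s := Set.range ((↑) : ℕ → ℝ))
    · rintro x ⟨n, rfl⟩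
      simp [Polynomial.IsRoot, h n]
    · exact Set.infinite_range_of_injective Nat.cast_injective
  exact sub_eq_zero.mp this

lemma vander_nat (N a b : ℕ) :
    ∑ j ∈ Finset.range (N + 1), ch (a : ℝ) j * ch (b : ℝ) (N - j) = ch ((a : ℝ) + b) N := by
  have := Nat.add_choose_eq a b N
  rw [Finset.Nat.sum_antidiagonal_eq_sum_range_succ (fun i j => a.choose i * b.choose j)] at this
  rw [← Nat.cast_add, ch_natCast]
  simp only [ch_natCast]
  exact_mod_cast this.symm

lemma vander_x (N b : ℕ) (x : ℝ) :
    ∑ j ∈ Finset.range (N + 1), ch x j * ch (b : ℝ) (N - j) = ch (x + b) N := by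
  have hpoly : (∑ j ∈ Finset.range (N + 1), chP j * Polynomial.C (ch (b : ℝ) (N - j)))
      = (chP N).comp (Polynomial.X + Polynomial.C (b : ℝ)) := by
    apply poly_eq_of_nat_eval
    intro a
    simp only [Polynomial.eval_finset_sum, Polynomial.eval_mul, Polynomial.eval_C,
      Polynomial.eval_comp, Polynomial.eval_add, Polynomial.eval_X, chP_eval]
    rw [← Nat.cast_add] at *
    simpa [chP_eval] using vander_nat N a b
  have := congrArg (Polynomial.eval x) hpoly
  simpa [Polynomial.eval_finset_sum, chP_eval] using this

lemma vander (N : ℕ) (x y : ℝ) :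
    ∑ j ∈ Finset.range (N + 1), ch x j * ch y (N - j) = ch (x + y) N := by
  have hpoly : (∑ j ∈ Finset.range (N + 1), Polynomial.C (ch x j) * chP (N - j))
      = (chP N).comp (Polynomial.C x + Polynomial.X) := by
    apply poly_eq_of_nat_eval
    intro b
    simp only [Polynomial.eval_finset_sum, Polynomial.eval_mul, Polynomial.eval_C,
      Polynomial.eval_comp, Polynomial.eval_add, Polynomial.eval_X, chP_eval]
    simpa [chP_eval] using vander_x N b x
  have := congrArg (Polynomial.eval y) hpoly
  simpa [Polynomial.eval_finset_sum, chP_eval] using this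


lemma fwdDiff_PP (m : ℕ) : fwdDiff (1:ℝ) (PP m) = fun t => (m : ℝ) * PP (m - 1) (t + 1) := by
  ext t
  cases m with
  | zero => simp [fwdDiff, PP]
  | succ m =>
    have h1 : PP (m + 1) t = (t + 1) * PP m (t + 1) := by
      rw [PP, Finset.prod_range_succ', mul_comm]
      congr 1
      · norm_num
      · exact Finset.prod_congr rfl fun i _ => by push_cast; ring
    have h2 : PP (m + 1) (t + 1) = PP m (t + 1) * (t + 1 + m + 1) := by
      rw [PP, Finset.prod_range_succ, PP]
    rw [fwdDiff, h2, h1]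
    push_cast; ring

lemma fwdDiff_iter_shift (f : ℝ → ℝ) (c : ℝ) (n : ℕ) :
    (fwdDiff (1:ℝ))^[n] (fun t => f (t + c)) = fun t => (fwdDiff (1:ℝ))^[n] f (t + c) := by
  induction n generalizing f with
  | zero => simp
  | succ n ih =>
    rw [Function.iterate_succ_apply, Function.iterate_succ_apply]
    rw [show fwdDiff (1:ℝ) (fun t => f (t + c)) = fun t => (fwdDiff (1:ℝ) f) (t + c) by
      ext t; simp only [fwdDiff]; ring_nf]
    exact ih _

lemma fwdDiff_iter_PP (m n : ℕ) :
    (fwdDiff (1:ℝ))^[n] (PP m) = fun t => (m.descFactorial n : ℝ) * PP (m - n) (t + n) := by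
  induction n generalizing m with
  | zero => ext t; simp
  | succ n ih =>
    rw [Function.iterate_succ_apply, fwdDiff_PP]
    have : (fun t => (m : ℝ) * PP (m - 1) (t + 1)) =
        (m : ℝ) • (fun t => PP (m - 1) (t + 1)) := by ext t; simp
    rw [this, fwdDiff_iter_const_smul, fwdDiff_iter_shift (fun t => PP (m-1) t) 1 n, ih]
    ext t
    cases m with
    | zero => simp [PP]
    | succ m =>
      rw [Nat.succ_descFactorial_succ]
      simp only [Pi.smul_apply, smul_eq_mul]
      push_cast
      rw [show t + 1 + (n:ℝ) = t + ((n:ℝ)+1) by ring]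
      ring

lemma sum_alt_PP (m n : ℕ) (t : ℝ) :
    ∑ j ∈ Finset.range (n + 1), (-1 : ℝ) ^ j * (n.choose j : ℝ) * PP m (t + j) =
      (-1 : ℝ) ^ n * (m.descFactorial n : ℝ) * PP (m - n) (t + n) := by
  have h := fwdDiff_iter_eq_sum_shift (1 : ℝ) (PP m) n t
  rw [fwdDiff_iter_PP] at h
  simp only at h
  have h2 : ∀ j ∈ Finset.range (n+1), ((-1 : ℤ) ^ (n - j) * (n.choose j : ℤ)) • PP m (t + j • (1:ℝ))
      = (-1:ℝ)^n * ((-1 : ℝ) ^ j * (n.choose j : ℝ) * PP m (t + j)) := by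
    intro j hj
    have hj' : j ≤ n := Nat.lt_succ_iff.mp (Finset.mem_range.mp hj)
    have hsq : (-1:ℝ)^j * (-1)^j = 1 := by rw [← mul_pow]; norm_num
    have hs : (-1:ℝ)^(n-j) = (-1)^n * (-1)^j := by
      have h1 : (-1:ℝ)^(n-j) * (-1)^j = (-1)^n := by rw [← pow_add, Nat.sub_add_cancel hj']
      calc (-1:ℝ)^(n-j) = (-1)^(n-j) * ((-1)^j * (-1)^j) := by rw [hsq, mul_one]
        _ = ((-1)^(n-j) * (-1)^j) * (-1)^j := by ring
        _ = (-1)^n * (-1)^j := by rw [h1]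
    rw [zsmul_eq_mul]
    push_cast
    rw [hs]
    simp only [nsmul_eq_mul, mul_one]
    ring
  rw [Finset.sum_congr rfl h2, ← Finset.mul_sum] at h
  have h3 : ((-1:ℝ)^n) * ((m.descFactorial n : ℝ) * PP (m-n) (t+n))
      = (-1:ℝ)^n * ((-1:ℝ)^n * ∑ j ∈ Finset.range (n+1),
          (-1 : ℝ) ^ j * (n.choose j : ℝ) * PP m (t + j)) := by rw [← h]
  rw [← mul_assoc, ← mul_assoc, ← mul_pow] at h3
  norm_num at h3
  rw [h3]


lemma PP_pos {m : ℕ} {t : ℝ} (ht : -1 < t) : 0 < PP m t :=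
  Finset.prod_pos fun i _ => by
    have : (0:ℝ) ≤ i := Nat.cast_nonneg i
    linarith

lemma PP_succ (m : ℕ) (t : ℝ) : PP (m+1) t = PP m t * (t + m + 1) := by
  rw [PP, Finset.prod_range_succ, ← PP]

lemma Gamma_PP (m : ℕ) {t : ℝ} (ht : -1 < t) :
    Real.Gamma (t + 1 + m) = Real.Gamma (t + 1) * PP m t := by
  induction m with
  | zero => simp [PP]
  | succ m ih =>
    have h : t + 1 + (m + 1 : ℕ) = (t + 1 + m) + 1 := by push_cast; ring
    have h0 : (0:ℝ) < t + 1 + m := by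
      have : (0:ℝ) ≤ m := Nat.cast_nonneg m
      linarith
    rw [h, Real.Gamma_add_one (ne_of_gt h0), ih, PP_succ]
    ring

lemma integral_rpow_exp {s : ℝ} (hs : -1 < s) :
    ∫ x in Set.Ioi (0:ℝ), x ^ s * Real.exp (-x) = Real.Gamma (s + 1) := by
  rw [Real.Gamma_eq_integral (by linarith : (0:ℝ) < s + 1)]
  refine setIntegral_congr_fun measurableSet_Ioi fun x hx => ?_
  rw [show s + 1 - 1 = s by ring]
  ring

lemma integrable_rpow_exp {s : ℝ} (hs : -1 < s) :
    IntegrableOn (fun x : ℝ => x ^ s * Real.exp (-x)) (Set.Ioi 0) := by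
  have := Real.GammaIntegral_convergent (show (0:ℝ) < s + 1 by linarith)
  rw [show s + 1 - 1 = s by ring] at this
  exact this.congr_fun (fun x hx => by ring) measurableSet_Ioi


lemma laguerre_zero (α : ℝ) (n : ℕ) :
    laguerre α n 0 = Real.Gamma ((n:ℝ) + α + 1) / (Real.Gamma (α + 1) * (n.factorial : ℝ)) := by
  rw [laguerre, Finset.sum_eq_single 0]
  · simp
  · intro j hj hj0
    rw [neg_zero, zero_pow hj0]
    simp
  · intro h
    exact absurd (Finset.mem_range.2 (Nat.succ_pos n)) h

lemma pointwise_mono (α : ℝ) (m n : ℕ) {x : ℝ} (hx : 0 < x) :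
    (Polynomial.X ^ m : Polynomial ℝ).eval x * (laguerre α n x / laguerre α n 0) * x ^ α *
        Real.exp (-x) =
      ∑ j ∈ Finset.range (n + 1),
        (Real.Gamma ((n : ℝ) + α + 1) /
            (Real.Gamma (α + (j : ℝ) + 1) * ((n - j).factorial : ℝ)) * (-1) ^ j /
              (j.factorial : ℝ) / laguerre α n 0) *
          (x ^ (((m + j : ℕ) : ℝ) + α) * Real.exp (-x)) := by
  rw [laguerre, Finset.sum_div, Finset.mul_sum, Finset.sum_mul, Finset.sum_mul]
  refine Finset.sum_congr rfl fun j _ => ?_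
  have hxm : x ^ (((m + j : ℕ) : ℝ) + α) = x ^ m * x ^ j * x ^ α := by
    rw [Real.rpow_add hx, Real.rpow_natCast, pow_add]
  rw [hxm]
  have hneg : (-x) ^ j = (-1 : ℝ) ^ j * x ^ j := neg_pow x j
  simp only [Polynomial.eval_pow, Polynomial.eval_X]
  rw [hneg]
  ring

lemma lagCoeff_Xpow {α : ℝ} (hα : -1 < α) (m n : ℕ) :
    lagCoeff α (Polynomial.X ^ m) n =
      (-1 : ℝ) ^ n * (m.descFactorial n : ℝ) * Real.Gamma (α + 1) * PP (m - n) (α + n) := by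
  have hL0 : laguerre α n 0 ≠ 0 := by
    rw [laguerre_zero]
    have h1 : 0 < Real.Gamma ((n:ℝ) + α + 1) :=
      Real.Gamma_pos_of_pos (by have : (0:ℝ) ≤ n := Nat.cast_nonneg n; linarith)
    have h2 : 0 < Real.Gamma (α + 1) := Real.Gamma_pos_of_pos (by linarith)
    have h3 : 0 < (n.factorial : ℝ) := by exact_mod_cast n.factorial_pos
    positivity
  have hint : ∀ j : ℕ, IntegrableOn
      (fun x : ℝ => (Real.Gamma ((n : ℝ) + α + 1) /
            (Real.Gamma (α + (j : ℝ) + 1) * ((n - j).factorial : ℝ)) * (-1) ^ j /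
              (j.factorial : ℝ) / laguerre α n 0) *
          (x ^ (((m + j : ℕ) : ℝ) + α) * Real.exp (-x))) (Set.Ioi 0) := by
    intro j
    apply Integrable.const_mul
    apply integrable_rpow_exp
    have : (0:ℝ) ≤ ((m + j : ℕ) : ℝ) := Nat.cast_nonneg _
    linarith
  have hval : lagCoeff α (Polynomial.X ^ m) n =
      ∑ j ∈ Finset.range (n + 1),
        (Real.Gamma ((n : ℝ) + α + 1) /
            (Real.Gamma (α + (j : ℝ) + 1) * ((n - j).factorial : ℝ)) * (-1) ^ j /
              (j.factorial : ℝ) / laguerre α n 0) * Real.Gamma (((m + j : ℕ) : ℝ) + α + 1) := by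
    rw [lagCoeff]
    rw [setIntegral_congr_fun measurableSet_Ioi
      (fun x hx => pointwise_mono α m n (Set.mem_Ioi.1 hx))]
    rw [integral_finset_sum _ (fun j _ => hint j)]
    refine Finset.sum_congr rfl fun j _ => ?_
    rw [MeasureTheory.integral_const_mul, integral_rpow_exp
      (by have : (0:ℝ) ≤ ((m + j : ℕ) : ℝ) := Nat.cast_nonneg _; linarith)]
  rw [hval]
  -- now the algebraic evaluation
  have hterm : ∀ j ∈ Finset.range (n + 1),
      (Real.Gamma ((n : ℝ) + α + 1) /
          (Real.Gamma (α + (j : ℝ) + 1) * ((n - j).factorial : ℝ)) * (-1) ^ j /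
            (j.factorial : ℝ) / laguerre α n 0) * Real.Gamma (((m + j : ℕ) : ℝ) + α + 1)
      = (Real.Gamma ((n:ℝ) + α + 1) / ((n.factorial : ℝ) * laguerre α n 0)) *
          ((-1:ℝ) ^ j * (n.choose j : ℝ) * PP m (α + j)) := by
    intro j hj
    have hj' : j ≤ n := Nat.lt_succ_iff.mp (Finset.mem_range.mp hj)
    have hGj : 0 < Real.Gamma (α + (j:ℝ) + 1) :=
      Real.Gamma_pos_of_pos (by have : (0:ℝ) ≤ j := Nat.cast_nonneg j; linarith)
    have hGamma : Real.Gamma (((m + j : ℕ) : ℝ) + α + 1)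
        = Real.Gamma (α + (j : ℝ) + 1) * PP m (α + j) := by
      have := Gamma_PP m (t := α + j)
        (by have : (0:ℝ) ≤ j := Nat.cast_nonneg j; linarith)
      rw [show ((m + j : ℕ) : ℝ) + α + 1 = α + (j:ℝ) + 1 + m by push_cast; ring,
        show α + (j:ℝ) + 1 = (α + (j:ℝ)) + 1 by ring]
      exact this
    have hfact : ((n.factorial : ℝ)) = (n.choose j : ℝ) * (j.factorial : ℝ) *
        (((n - j).factorial : ℝ)) := by
      exact_mod_cast congrArg (fun z : ℕ => (z : ℝ)) (Nat.choose_mul_factorial_mul_factorial hj').symm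
    have hjf : (j.factorial : ℝ) ≠ 0 := by exact_mod_cast j.factorial_ne_zero
    have hnjf : ((n - j).factorial : ℝ) ≠ 0 := by exact_mod_cast (n - j).factorial_ne_zero
    have hnf : (n.factorial : ℝ) ≠ 0 := by exact_mod_cast n.factorial_ne_zero
    have hch : ((n.choose j : ℕ) : ℝ) ≠ 0 := by
      exact_mod_cast (Nat.choose_pos hj').ne'
    rw [hGamma, hfact]
    field_simp
  rw [Finset.sum_congr rfl hterm, ← Finset.mul_sum, sum_alt_PP m n α]
  rw [laguerre_zero]
  have h1 : Real.Gamma ((n:ℝ) + α + 1) ≠ 0 := by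
    have : 0 < Real.Gamma ((n:ℝ) + α + 1) :=
      Real.Gamma_pos_of_pos (by have : (0:ℝ) ≤ n := Nat.cast_nonneg n; linarith)
    exact ne_of_gt this
  have hnf : (n.factorial : ℝ) ≠ 0 := by exact_mod_cast n.factorial_ne_zero
  have h2 : Real.Gamma (α + 1) ≠ 0 := ne_of_gt (Real.Gamma_pos_of_pos (by linarith))
  field_simp


lemma prod_range_add_one (j : ℕ) : (∏ i ∈ Finset.range j, ((i : ℝ) + 1)) = (j.factorial : ℝ) := by
  induction j with
  | zero => simp
  | succ j ih => rw [Finset.prod_range_succ, ih, Nat.factorial_succ]; push_cast; ring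

lemma binomGen_eq (lam : ℝ) (j : ℕ) : binomGen (-lam - 1) j = (-1 : ℝ) ^ j * ch lam j := by
  rw [binomGen, ch]
  have h : ∀ i ∈ Finset.range j, (-lam - 1 + (i:ℝ) + 1) / ((i:ℝ) + 1)
      = (-1) * ((lam - i) / ((i:ℝ) + 1)) := fun i _ => by ring
  rw [Finset.prod_congr rfl h, Finset.prod_mul_distrib, Finset.prod_const,
    Finset.prod_div_distrib, prod_range_add_one, Finset.card_range]

lemma descF_add (m k j : ℕ) :
    m.descFactorial (k + j) = (m - k).descFactorial j * m.descFactorial k := by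
  have := Nat.descFactorial_mul_descFactorial (n := m) (k := k) (m := k + j)
    (Nat.le_add_right k j)
  rw [show k + j - k = j by omega] at this
  exact this.symm

lemma descF_cast (N j : ℕ) (h : j ≤ N) :
    (N.descFactorial j : ℝ) * (((N - j).factorial : ℝ)) = (N.factorial : ℝ) := by
  exact_mod_cast congrArg (fun z : ℕ => (z : ℝ))
    (by rw [mul_comm]; exact Nat.factorial_mul_descFactorial h)

lemma PP_reflect (r : ℕ) (y : ℝ) : PP r (y - r) = ∏ i ∈ Finset.range r, (y - i) := by
  rw [PP, ← Finset.prod_range_reflect (fun i => y - i) r]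
  refine Finset.prod_congr rfl fun i hi => ?_
  have hi' : i < r := Finset.mem_range.mp hi
  rw [show r - 1 - i = r - (i + 1) by omega, Nat.cast_sub (by omega : i + 1 ≤ r)]
  push_cast
  ring

lemma star2 (N : ℕ) (lam β : ℝ) :
    ∑ j ∈ Finset.range (N + 1), ch lam j * ((N.descFactorial j : ℝ) * PP (N - j) (β + j))
      = PP N (β + lam) := by
  have hterm : ∀ j ∈ Finset.range (N + 1),
      ch lam j * ((N.descFactorial j : ℝ) * PP (N - j) (β + j))
        = (N.factorial : ℝ) * (ch lam j * ch (β + N) (N - j)) := by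
    intro j hj
    have hj' : j ≤ N := Nat.lt_succ_iff.mp (Finset.mem_range.mp hj)
    have hPP : PP (N - j) (β + j) = ch (β + N) (N - j) * ((N - j).factorial : ℝ) := by
      have h1 : PP (N - j) ((β + N) - (N - j : ℕ)) = ∏ i ∈ Finset.range (N - j), ((β + N) - i) :=
        PP_reflect (N - j) (β + N)
      rw [show β + (j:ℝ) = (β + N) - ((N - j : ℕ) : ℝ) by
        rw [Nat.cast_sub hj']; ring, h1, ch]
      field_simp
    rw [hPP]
    rw [← descF_cast N j hj']
    ring
  rw [Finset.sum_congr rfl hterm, ← Finset.mul_sum, vander N lam (β + N)]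
  have h2 : PP N ((lam + (β + N)) - (N:ℕ)) = ∏ i ∈ Finset.range N, ((lam + (β + N)) - i) :=
    PP_reflect N (lam + (β + N))
  rw [ch, show β + lam = (lam + (β + N)) - (N:ℕ) by push_cast; ring, h2]
  rw [show ((N.factorial : ℝ)) * ((∏ i ∈ Finset.range N, (lam + (β + N) - i)) / (N.factorial : ℝ))
    = ∏ i ∈ Finset.range N, (lam + (β + N) - i) by
      field_simp]

lemma main_alg {α lam : ℝ} (hα : -1 < α) (hlam : 0 ≤ lam) (m k M : ℕ) (hm : m < M) :
    ∑ j ∈ Finset.range M, binomGen (-lam - 1) j *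
        ((-1 : ℝ) ^ (k + j) * (m.descFactorial (k + j) : ℝ) * Real.Gamma (α + 1) *
          PP (m - (k + j)) (α + (k + j)))
      = (Real.Gamma (α + 1) / Real.Gamma (α + lam + 1)) *
          ((-1 : ℝ) ^ k * (m.descFactorial k : ℝ) * Real.Gamma (α + lam + 1) *
            PP (m - k) ((α + lam) + k)) := by
  have hG : Real.Gamma (α + lam + 1) ≠ 0 :=
    ne_of_gt (Real.Gamma_pos_of_pos (by linarith))
  have hRHS : (Real.Gamma (α + 1) / Real.Gamma (α + lam + 1)) *
      ((-1 : ℝ) ^ k * (m.descFactorial k : ℝ) * Real.Gamma (α + lam + 1) *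
        PP (m - k) ((α + lam) + k))
      = (-1 : ℝ) ^ k * Real.Gamma (α + 1) * ((m.descFactorial k : ℝ) *
          PP (m - k) ((α + k) + lam)) := by
    rw [show (α + lam) + (k:ℝ) = (α + k) + lam by ring]
    field_simp
  rw [hRHS]
  have hterm : ∀ j ∈ Finset.range M, binomGen (-lam - 1) j *
      ((-1 : ℝ) ^ (k + j) * (m.descFactorial (k + j) : ℝ) * Real.Gamma (α + 1) *
        PP (m - (k + j)) (α + (k + j)))
      = (-1 : ℝ) ^ k * Real.Gamma (α + 1) *
          (ch lam j * ((m.descFactorial (k + j) : ℝ) * PP (m - (k + j)) (α + (k + j)))) := by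
    intro j _
    rw [binomGen_eq, pow_add]
    have : (-1 : ℝ) ^ j * (-1 : ℝ) ^ j = 1 := by rw [← mul_pow]; norm_num
    calc (-1 : ℝ) ^ j * ch lam j *
          ((-1 : ℝ) ^ k * (-1 : ℝ) ^ j * (m.descFactorial (k + j) : ℝ) * Real.Gamma (α + 1) *
            PP (m - (k + j)) (α + (k + j)))
        = ((-1 : ℝ) ^ j * (-1 : ℝ) ^ j) * ((-1 : ℝ) ^ k * Real.Gamma (α + 1) *
            (ch lam j * ((m.descFactorial (k + j) : ℝ) * PP (m - (k + j)) (α + (k + j))))) := by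
          ring
      _ = _ := by rw [this]; ring
  rw [Finset.sum_congr rfl hterm, ← Finset.mul_sum]
  rcases le_or_gt k m with hk | hk
  · -- k ≤ m
    set N := m - k with hN
    have hsub : Finset.range (N + 1) ⊆ Finset.range M := by
      intro t ht
      simp only [Finset.mem_range] at *
      omega
    rw [← Finset.sum_subset hsub (fun j hjM hjN => by
      have : m < k + j := by
        simp only [Finset.mem_range, not_lt] at hjN ⊢
        omega
      rw [Nat.descFactorial_eq_zero_iff_lt.2 this]
      push_cast
      ring)]
    have hterm2 : ∀ j ∈ Finset.range (N + 1),
        ch lam j * ((m.descFactorial (k + j) : ℝ) * PP (m - (k + j)) (α + (k + j)))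
          = (m.descFactorial k : ℝ) *
              (ch lam j * ((N.descFactorial j : ℝ) * PP (N - j) ((α + k) + j))) := by
      intro j _
      rw [descF_add m k j, ← hN, show m - (k + j) = N - j by omega,
        show α + ((k:ℝ) + j) = (α + k) + j by ring]
      push_cast
      ring
    rw [Finset.sum_congr rfl hterm2, ← Finset.mul_sum, star2 N lam (α + k)]
  · -- m < k : everything vanishes
    have h1 : (m.descFactorial k : ℝ) = 0 := by
      rw [Nat.descFactorial_eq_zero_iff_lt.2 hk]; norm_num
    have h2 : ∀ j ∈ Finset.range M,
        ch lam j * ((m.descFactorial (k + j) : ℝ) * PP (m - (k + j)) (α + (k + j))) = 0 := by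
      intro j _
      rw [Nat.descFactorial_eq_zero_iff_lt.2 (by omega)]
      push_cast
      ring
    rw [Finset.sum_congr rfl h2, Finset.sum_const_zero, h1]
    ring

lemma integrable_mono {α : ℝ} (hα : -1 < α) (m n : ℕ) :
    IntegrableOn (fun x : ℝ => (Polynomial.X ^ m : Polynomial ℝ).eval x *
      (laguerre α n x / laguerre α n 0) * x ^ α * Real.exp (-x)) (Set.Ioi 0) := by
  have hint : IntegrableOn (fun x : ℝ => ∑ j ∈ Finset.range (n + 1),
      (Real.Gamma ((n : ℝ) + α + 1) /
          (Real.Gamma (α + (j : ℝ) + 1) * ((n - j).factorial : ℝ)) * (-1) ^ j /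
            (j.factorial : ℝ) / laguerre α n 0) *
        (x ^ (((m + j : ℕ) : ℝ) + α) * Real.exp (-x))) (Set.Ioi 0) := by
    apply MeasureTheory.integrable_finset_sum
    intro j _
    apply Integrable.const_mul
    apply integrable_rpow_exp
    have : (0:ℝ) ≤ ((m + j : ℕ) : ℝ) := Nat.cast_nonneg _
    linarith
  exact hint.congr_fun (fun x hx => (pointwise_mono α m n (Set.mem_Ioi.1 hx)).symm)
    measurableSet_Ioi

lemma lagCoeff_eq_sum {α : ℝ} (hα : -1 < α) (f : Polynomial ℝ) (n M : ℕ)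
    (hM : f.natDegree < M) :
    lagCoeff α f n = ∑ m ∈ Finset.range M, f.coeff m * lagCoeff α (Polynomial.X ^ m) n := by
  have hpt : ∀ x : ℝ, f.eval x * (laguerre α n x / laguerre α n 0) * x ^ α * Real.exp (-x)
      = ∑ m ∈ Finset.range M, f.coeff m * ((Polynomial.X ^ m : Polynomial ℝ).eval x *
          (laguerre α n x / laguerre α n 0) * x ^ α * Real.exp (-x)) := by
    intro x
    rw [Polynomial.eval_eq_sum_range' hM, Finset.sum_mul, Finset.sum_mul, Finset.sum_mul]
    refine Finset.sum_congr rfl fun m _ => ?_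
    simp only [Polynomial.eval_pow, Polynomial.eval_X]
    ring
  rw [lagCoeff]
  simp only [hpt]
  rw [MeasureTheory.integral_finset_sum _
    (fun m _ => ((integrable_mono hα m n).const_mul (f.coeff m)))]
  refine Finset.sum_congr rfl fun m _ => ?_
  rw [MeasureTheory.integral_const_mul, lagCoeff]

lemma lagCoeff_vanish {α : ℝ} (hα : -1 < α) (f : Polynomial ℝ) {n : ℕ}
    (h : f.natDegree < n) : lagCoeff α f n = 0 := by
  rw [lagCoeff_eq_sum hα f n (f.natDegree + 1) (Nat.lt_succ_self _)]
  refine Finset.sum_eq_zero fun m hm => ?_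
  have hmn : m < n := by
    have := Finset.mem_range.mp hm
    omega
  rw [lagCoeff_Xpow hα m n, Nat.descFactorial_eq_zero_iff_lt.2 hmn]
  push_cast
  ring

theorem fractional_difference_shift (α lam : ℝ) (hα : -1 < α) (hlam : 0 ≤ lam)
    (f : Polynomial ℝ) (k : ℕ) :
    ∑' j : ℕ, binomGen (-lam - 1) j * lagCoeff α f (k + j) =
      (Real.Gamma (α + 1) / Real.Gamma (α + lam + 1)) * lagCoeff (α + lam) f k := by
  set d := f.natDegree with hd
  have hαl : -1 < α + lam := by linarith
  rw [tsum_eq_sum (s := Finset.range (d + 1)) (f := fun j => binomGen (-lam - 1) j *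
      lagCoeff α f (k + j)) (fun j hj => by
    simp only [Finset.mem_range, not_lt] at hj
    have hdk : d < k + j := by omega
    show binomGen (-lam - 1) j * lagCoeff α f (k + j) = 0
    rw [lagCoeff_vanish hα f hdk, mul_zero])]
  have hL : ∀ j, lagCoeff α f (k + j) = ∑ m ∈ Finset.range (d + 1),
      f.coeff m * lagCoeff α (Polynomial.X ^ m) (k + j) :=
    fun j => lagCoeff_eq_sum hα f (k + j) (d + 1) (Nat.lt_succ_self _)
  have hR : lagCoeff (α + lam) f k = ∑ m ∈ Finset.range (d + 1),
      f.coeff m * lagCoeff (α + lam) (Polynomial.X ^ m) k :=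
    lagCoeff_eq_sum hαl f k (d + 1) (Nat.lt_succ_self _)
  simp only [hL]
  rw [hR, Finset.mul_sum]
  simp_rw [Finset.mul_sum]
  rw [Finset.sum_comm]
  refine Finset.sum_congr rfl fun m hm => ?_
  have hmd : m < d + 1 := Finset.mem_range.mp hm
  rw [lagCoeff_Xpow hαl m k]
  have hswap : ∑ j ∈ Finset.range (d+1),
      binomGen (-lam-1) j * (f.coeff m * lagCoeff α (Polynomial.X ^ m) (k+j))
      = f.coeff m * ∑ j ∈ Finset.range (d+1),
          binomGen (-lam-1) j * lagCoeff α (Polynomial.X ^ m) (k+j) := by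
    rw [Finset.mul_sum]; exact Finset.sum_congr rfl fun j _ => by ring
  rw [hswap]
  have hXj : ∀ j ∈ Finset.range (d+1), binomGen (-lam-1) j * lagCoeff α (Polynomial.X ^ m) (k+j)
      = binomGen (-lam-1) j * ((-1:ℝ)^(k+j) * (m.descFactorial (k+j):ℝ) * Real.Gamma (α+1) *
          PP (m-(k+j)) (α+((k:ℝ)+(j:ℝ)))) := by
    intro j _
    rw [lagCoeff_Xpow hα m (k+j)]
    norm_num
  rw [Finset.sum_congr rfl hXj, main_alg hα hlam m k (d+1) hmd]
  ring
end
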